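/- Let f : (0,∞) → ℝ be measurable and suppose lim_{n→∞} f(a n) = L for almost every a > 0. Then for all ε > 0 and all C > 1, lim_{x→∞} μ({t ∈ [x, Cx] : |f(t) − L| > ε}) / μ([x, Cx]) = 0, where μ is Lebesgue measure. -/

import Mathlib

open Filter Set MeasureTheory Pointwise

theorem stmt_6 (f : ℝ → ℝ) (L : ℝ) (hmeas : Measurable f)
    (h : ∀ᵐ a ∂(volume.restrict (Set.Ioi (0:ℝ))),
      Tendsto (fun n : ℕ => f (a * n)) atTop (nhds L)) :
    ∀ ε > (0:ℝ), ∀ C > (1:ℝ),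
      Tendsto
        (fun x : ℝ =>
          (volume {t ∈ Set.Icc x (C * x) | ε < |f t - L|}).toReal /
            (volume (Set.Icc x (C * x))).toReal)
        atTop (nhds 0) := by
  intro ε hε C hC
  have hC0 : (0:ℝ) < C := lt_trans one_pos hC
  set B : Set ℝ := {t | ε < |f t - L|} with hBdef
  have hBm : MeasurableSet B :=
    measurableSet_lt measurable_const ((hmeas.sub measurable_const).abs)
  set C' : ℝ := 2 * C with hC'def
  have hC'1 : (1:ℝ) < C' := by nlinarith
  set A : ℕ → Set ℝ := fun n => Icc (1:ℝ) C' ∩ (fun a => a * (n:ℝ)) ⁻¹' B with hAdef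
  have hAm : ∀ n, MeasurableSet (A n) := fun n =>
    measurableSet_Icc.inter (hBm.preimage (measurable_id.mul_const _))
  -- a.e. statement on all of ℝ
  have h' : ∀ᵐ a ∂(volume : Measure ℝ), a ∈ Ioi (0:ℝ) →
      Tendsto (fun n : ℕ => f (a * n)) atTop (nhds L) :=
    (ae_restrict_iff' measurableSet_Ioi).mp h
  have hlim : ∀ᵐ a ∂(volume : Measure ℝ), ∀ᶠ n in atTop, (a ∈ A n ↔ a ∈ (∅ : Set ℝ)) := by
    filter_upwards [h'] with a ha
    by_cases hmem : a ∈ Icc (1:ℝ) C'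
    · have hapos : a ∈ Ioi (0:ℝ) := lt_of_lt_of_le one_pos hmem.1
      filter_upwards [Metric.tendsto_nhds.mp (ha hapos) ε hε] with n hn
      simp only [mem_empty_iff_false, iff_false]
      intro hAn
      have h2 : ε < |f (a * n) - L| := hAn.2
      rw [Real.dist_eq] at hn
      linarith
    · refine Eventually.of_forall fun n => ?_
      simp only [mem_empty_iff_false, iff_false]
      exact fun hAn => hmem hAn.1
  have key : Tendsto (fun n => volume (A n)) atTop (nhds 0) := by
    have hIfin : volume (Icc (1:ℝ) C') ≠ ⊤ := by
      rw [Real.volume_Icc]; exact ENNReal.ofReal_ne_top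
    have := tendsto_measure_of_ae_tendsto_indicator atTop MeasurableSet.empty hAm
      measurableSet_Icc hIfin (Eventually.of_forall fun n => inter_subset_left) hlim
    simpa using this
  -- scaling identity
  have hscale : ∀ n : ℕ, 1 ≤ n → volume (B ∩ Icc (n:ℝ) (C' * n))
      = ENNReal.ofReal n * volume (A n) := by
    intro n hn
    have hnpos : (0:ℝ) < n := by exact_mod_cast hn
    have hset : B ∩ Icc (n:ℝ) (C' * n) = (n:ℝ) • A n := by
      ext t
      simp only [Set.mem_smul_set, mem_inter_iff, mem_Icc, hAdef, mem_preimage,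
        smul_eq_mul]
      constructor
      · rintro ⟨htB, h1, h2⟩
        refine ⟨t / n, ⟨⟨(one_le_div hnpos).mpr h1, (div_le_iff₀ hnpos).mpr (by linarith)⟩, ?_⟩,
          by field_simp⟩
        rwa [div_mul_cancel₀ t (ne_of_gt hnpos)]
      · rintro ⟨a, ⟨⟨ha1, ha2⟩, haB⟩, rfl⟩
        refine ⟨by rwa [mul_comm], by nlinarith, by nlinarith⟩
    rw [hset, Measure.addHaar_smul_of_nonneg volume (Nat.cast_nonneg n)]
    simp
  -- finiteness facts
  have hAfin : ∀ n : ℕ, volume (A n) ≠ ⊤ := by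
    intro n
    refine ne_top_of_le_ne_top ?_ (measure_mono inter_subset_left)
    rw [Real.volume_Icc]; exact ENNReal.ofReal_ne_top
  -- upper bound
  have hupper : ∀ᶠ x : ℝ in atTop,
      (volume {t ∈ Set.Icc x (C * x) | ε < |f t - L|}).toReal /
        (volume (Set.Icc x (C * x))).toReal
      ≤ (volume (A ⌊x⌋₊)).toReal / (C - 1) := by
    filter_upwards [eventually_ge_atTop (1:ℝ)] with x hx
    set n : ℕ := ⌊x⌋₊ with hn
    have hn1 : 1 ≤ n := Nat.le_floor (by exact_mod_cast hx)
    have hnx : (n:ℝ) ≤ x := Nat.floor_le (by linarith)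
    have hxn : x < n + 1 := Nat.lt_floor_add_one x
    have hnpos : (0:ℝ) < n := by exact_mod_cast hn1
    have hsub : {t ∈ Set.Icc x (C * x) | ε < |f t - L|} ⊆ B ∩ Icc (n:ℝ) (C' * n) := by
      rintro t ⟨⟨ht1, ht2⟩, htB⟩
      refine ⟨htB, by linarith, ?_⟩
      have : C * x < C * (n + 1) := by nlinarith
      have hn1R : (1:ℝ) ≤ n := by exact_mod_cast hn1
      have h2n : C * ((n:ℝ) + 1) ≤ 2 * C * n := by nlinarith [mul_nonneg hC0.le (sub_nonneg.mpr hn1R)]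
      rw [hC'def]; linarith
    have hnum : volume {t ∈ Set.Icc x (C * x) | ε < |f t - L|}
        ≤ ENNReal.ofReal n * volume (A n) := by
      rw [← hscale n hn1]; exact measure_mono hsub
    have hrfin : ENNReal.ofReal (n:ℝ) * volume (A n) ≠ ⊤ :=
      ENNReal.mul_ne_top ENNReal.ofReal_ne_top (hAfin n)
    have hnumR : (volume {t ∈ Set.Icc x (C * x) | ε < |f t - L|}).toReal
        ≤ (n:ℝ) * (volume (A n)).toReal := by
      have := ENNReal.toReal_mono hrfin hnum
      rwa [ENNReal.toReal_mul, ENNReal.toReal_ofReal hnpos.le] at this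
    have hdenR : (volume (Set.Icc x (C * x))).toReal = C * x - x := by
      rw [Real.volume_Icc, ENNReal.toReal_ofReal (by nlinarith)]
    have hdpos : (0:ℝ) < (C - 1) * n := by nlinarith
    have hdle : (C - 1) * n ≤ (volume (Set.Icc x (C * x))).toReal := by
      rw [hdenR]; nlinarith
    calc (volume {t ∈ Set.Icc x (C * x) | ε < |f t - L|}).toReal /
            (volume (Set.Icc x (C * x))).toReal
        ≤ ((n:ℝ) * (volume (A n)).toReal) / ((C - 1) * n) :=
          div_le_div₀ (by positivity) hnumR hdpos hdle
      _ = (volume (A n)).toReal / (C - 1) := by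
          rw [mul_comm (C - 1) (n:ℝ), mul_div_mul_left _ _ (ne_of_gt hnpos)]
  have hlow : ∀ᶠ x : ℝ in atTop,
      (0:ℝ) ≤ (volume {t ∈ Set.Icc x (C * x) | ε < |f t - L|}).toReal /
        (volume (Set.Icc x (C * x))).toReal :=
    Eventually.of_forall fun x => div_nonneg ENNReal.toReal_nonneg ENNReal.toReal_nonneg
  have hU : Tendsto (fun x : ℝ => (volume (A ⌊x⌋₊)).toReal / (C - 1)) atTop (nhds 0) := by
    have h1 : Tendsto (fun n : ℕ => (volume (A n)).toReal) atTop (nhds 0) := by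
      have := (ENNReal.tendsto_toReal (by simp : (0:ENNReal) ≠ ⊤)).comp key
      simpa [Function.comp_def] using this
    have h2 := h1.comp (tendsto_nat_floor_atTop (α := ℝ))
    have h3 := h2.div_const (C - 1)
    simpa using h3
  exact tendsto_of_tendsto_of_tendsto_of_le_of_le' tendsto_const_nhds hU hlow hupper
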